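/- Let G be a finite simple graph and K a set of vertices of G. If K is a potential maximal clique of G (i.e., K induces a maximal clique in some minimal triangulation of G), then no connected component of G \ K is full for K; that is, for every connected component C of G minus K, there exists a vertex of K with no neighbor in C. -/

import Mathlib

open SimpleGraph

variable {V : Type*}

/-- `C` is a connected component of `G \ K`:
nonempty, disjoint from `K`, connected, and maximal such. -/
def IsCompOf (G : SimpleGraph V) (K C : Set V) : Prop :=
  C.Nonempty ∧ Disjoint C K ∧ (G.induce C).Connected ∧
    ∀ D : Set V, C ⊆ D → Disjoint D K → (G.induce D).Connected → D = C

/-- The neighborhood of a set `C`: vertices outside `C` with a neighbor in `C`. -/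
def nbhd (G : SimpleGraph V) (C : Set V) : Set V :=
  {v | v ∉ C ∧ ∃ u ∈ C, G.Adj u v}

/-- `C` is a full component for `K` in `G`. -/
def IsFullComp (G : SimpleGraph V) (K C : Set V) : Prop :=
  IsCompOf G K C ∧ ∀ v ∈ K, ∃ u ∈ C, G.Adj u v

/-- Bouchitté–Todinca characterization of potential maximal cliques:
(a) no full component, (b) non-adjacent pairs of `K` covered by a common component. -/
def IsPMC (G : SimpleGraph V) (K : Set V) : Prop :=
  (∀ C : Set V, IsCompOf G K C → ¬ ∀ v ∈ K, ∃ u ∈ C, G.Adj u v) ∧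
  (∀ x ∈ K, ∀ y ∈ K, x ≠ y → ¬ G.Adj x y →
    ∃ C : Set V, IsCompOf G K C ∧ (∃ u ∈ C, G.Adj u x) ∧ (∃ u ∈ C, G.Adj u y))

/-- A graph is chordal if it has no induced cycle of length at least 4. -/
def IsChordal (G : SimpleGraph V) : Prop :=
  ∀ n : ℕ, 4 ≤ n → IsEmpty (SimpleGraph.cycleGraph n ↪g G)

/-- `H` is a minimal triangulation (minimal chordal completion) of `G`. -/
def IsMinimalTriangulation (G H : SimpleGraph V) : Prop :=
  G ≤ H ∧ IsChordal H ∧ ∀ H' : SimpleGraph V, G ≤ H' → H' ≤ H → IsChordal H' → H' = H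

/-- `K` is an inclusion-maximal clique of `G`. -/
def IsMaxClique (G : SimpleGraph V) (K : Set V) : Prop :=
  G.IsClique K ∧ ∀ K' : Set V, K ⊆ K' → G.IsClique K' → K' = K

/-- `K` is a potential maximal clique of `G`: a maximal clique of some minimal
triangulation of `G`. -/
def IsPMCtri (G : SimpleGraph V) (K : Set V) : Prop :=
  ∃ H : SimpleGraph V, IsMinimalTriangulation G H ∧ IsMaxClique H K

/-! ### Auxiliary lemmas -/

lemma cycle_adj_iff {n : ℕ} (u v : Fin (n+2)) : (cycleGraph (n+2)).Adj u v ↔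
    (u.val + 1 = v.val ∨ v.val + 1 = u.val ∨ (u.val = 0 ∧ v.val = n+1) ∨ (v.val = 0 ∧ u.val = n+1)) := by
  have hu := u.isLt; have hv := v.isLt
  have key : ∀ (x y : Fin (n+2)), x - y = 1 ↔ (y.val + 1 = x.val ∨ (x.val = 0 ∧ y.val = n+1)) := by
    intro x y
    have hx := x.isLt; have hy := y.isLt
    rw [Fin.sub_def, Fin.ext_iff]
    show (n + 2 - y.val + x.val) % (n+2) = ((1 : Fin (n+2)) : ℕ) ↔ _
    have h1 : ((1 : Fin (n+2)) : ℕ) = 1 := rfl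
    rw [h1]
    have hcase : (n + 2 - y.val + x.val) % (n+2) =
        if n + 2 - y.val + x.val < n + 2 then n + 2 - y.val + x.val else n + 2 - y.val + x.val - (n+2) := by
      split
      · exact Nat.mod_eq_of_lt ‹_›
      · rw [Nat.mod_eq_sub_mod (by omega), Nat.mod_eq_of_lt (by omega)]
    rw [hcase]
    split <;> omega
  rw [cycleGraph_adj, key, key]
  omega

lemma cycle_data_false {Γ : SimpleGraph V} (hch : IsChordal Γ) (t : V) (m : ℕ) (hm : 2 ≤ m)
    (w : ℕ → V)
    (hwadj : ∀ a, a < m → Γ.Adj (w a) (w (a+1)))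
    (hnochord : ∀ a b, b ≤ m → a + 1 < b → ¬Γ.Adj (w a) (w b))
    (hwinj : ∀ a, a ≤ m → ∀ b, b ≤ m → w a = w b → a = b)
    (htne : ∀ a, a ≤ m → t ≠ w a)
    (ht0 : Γ.Adj t (w 0)) (htm : Γ.Adj t (w m))
    (htmid : ∀ a, 0 < a → a < m → ¬Γ.Adj t (w a)) : False := by
  have hadj_iff : ∀ a b, a ≤ m → b ≤ m → (Γ.Adj (w a) (w b) ↔ (a + 1 = b ∨ b + 1 = a)) := by
    intro a b ha hb
    constructor
    · intro hadj
      rcases lt_trichotomy a b with h | h | h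
      · rcases Nat.lt_or_ge (a+1) b with h2 | h2
        · exact absurd hadj (hnochord a b hb h2)
        · omega
      · exact absurd (h ▸ hadj) (Γ.irrefl)
      · rcases Nat.lt_or_ge (b+1) a with h2 | h2
        · exact absurd hadj.symm (hnochord b a ha h2)
        · omega
    · rintro (h | h)
      · subst h; exact hwadj a (by omega)
      · subst h; exact (hwadj b (by omega)).symm
  have ht_iff : ∀ a, a ≤ m → (Γ.Adj t (w a) ↔ (a = 0 ∨ a = m)) := by
    intro a ha
    constructor
    · intro hadj
      by_contra hc
      push_neg at hc
      exact htmid a (by omega) (by omega) hadj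
    · rintro (h | h) <;> subst h
      · exact ht0
      · exact htm
  refine (hch (m+2) (by omega)).elim ?_
  refine ⟨⟨fun j => if j.val = 0 then t else w (j.val - 1), ?_⟩, ?_⟩
  · intro a b hab
    have hA := a.isLt; have hB := b.isLt
    simp only at hab
    by_cases h1 : a.val = 0 <;> by_cases h2 : b.val = 0 <;> simp [h1, h2] at hab
    · exact Fin.ext (by omega)
    · exact absurd hab (htne _ (by omega))
    · exact absurd hab.symm (htne _ (by omega))
    · have := hwinj _ (by omega) _ (by omega) hab
      exact Fin.ext (by omega)
  · intro a b
    have hA := a.isLt; have hB := b.isLt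
    show Γ.Adj (if a.val = 0 then t else w (a.val - 1)) (if b.val = 0 then t else w (b.val - 1)) ↔
      (cycleGraph (m+2)).Adj a b
    rw [cycle_adj_iff]
    by_cases h1 : a.val = 0 <;> by_cases h2 : b.val = 0 <;>
        simp only [h1, h2, if_pos, if_neg, ite_true, ite_false, true_and, false_and, or_false,
          false_or]
    · constructor
      · intro h; exact absurd h (Γ.irrefl)
      · omega
    · rw [ht_iff _ (by omega)]
      omega
    · constructor
      · intro h
        have := (ht_iff _ (show a.val - 1 ≤ m by omega)).mp h.symm
        omega
      · intro h
        have h' : a.val - 1 = 0 ∨ a.val - 1 = m := by omega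
        exact ((ht_iff _ (by omega)).mpr h').symm
    · rw [hadj_iff _ _ (by omega) (by omega)]
      omega

lemma getVert_dist_le {G : SimpleGraph V} (hconn : G.Connected) {a b : V} (p : G.Walk a b)
    (i k : ℕ) : G.dist (p.getVert i) (p.getVert (i + k)) ≤ k := by
  induction k with
  | zero => simp [SimpleGraph.dist_self]
  | succ k ih =>
    rcases Nat.lt_or_ge (i + k) p.length with h | h
    · have hadj := p.adj_getVert_succ h
      have h1 : G.dist (p.getVert (i+k)) (p.getVert (i+k+1)) = 1 := dist_eq_one_iff_adj.mpr hadj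
      calc G.dist (p.getVert i) (p.getVert (i + (k+1)))
          ≤ G.dist (p.getVert i) (p.getVert (i+k)) + G.dist (p.getVert (i+k)) (p.getVert (i+k+1)) :=
            hconn.dist_triangle
        _ ≤ k + 1 := by rw [h1]; omega
    · have h1 : p.getVert (i + (k+1)) = b := p.getVert_of_length_le (by omega)
      have h2 : p.getVert (i + k) = b := p.getVert_of_length_le (by omega)
      rw [h2] at ih
      rw [h1]
      exact ih.trans (by omega)

lemma no_chord {G : SimpleGraph V} (hconn : G.Connected) {a b : V} (p : G.Walk a b)
    (hlen : p.length = G.dist a b) {i j : ℕ} (hij : i + 1 < j) (hj : j ≤ p.length)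
    (hadj : G.Adj (p.getVert i) (p.getVert j)) : False := by
  have h1 : G.dist a (p.getVert i) ≤ i := by
    have := getVert_dist_le hconn p 0 i
    simpa using this
  have h2 : G.dist (p.getVert j) b ≤ p.length - j := by
    have := getVert_dist_le hconn p j (p.length - j)
    rwa [Nat.add_sub_cancel' hj, p.getVert_length] at this
  have h3 : G.dist (p.getVert i) (p.getVert j) = 1 := dist_eq_one_iff_adj.mpr hadj
  have h4 : G.dist a b ≤ G.dist a (p.getVert i) + G.dist (p.getVert i) b := hconn.dist_triangle
  have h5 : G.dist (p.getVert i) b ≤ G.dist (p.getVert i) (p.getVert j) + G.dist (p.getVert j) b :=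
    hconn.dist_triangle
  omega

lemma getVert_inj_of_isPath {G : SimpleGraph V} {a b : V} {p : G.Walk a b} (hp : p.IsPath) :
    ∀ i, i ≤ p.length → ∀ j, j ≤ p.length → p.getVert i = p.getVert j → i = j := by
  induction p with
  | nil => intro i hi j hj _; simp at hi hj; omega
  | @cons u x w h q ih =>
    intro i hi j hj heq
    rw [Walk.cons_isPath_iff] at hp
    rw [Walk.length_cons] at hi hj
    match i, j with
    | 0, 0 => rfl
    | 0, j + 1 =>
      exfalso
      apply hp.2
      rw [Walk.mem_support_iff_exists_getVert]
      refine ⟨j, ?_, by omega⟩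
      rw [Walk.getVert_cons_succ] at heq
      rw [← heq]; rfl
    | i + 1, 0 =>
      exfalso
      apply hp.2
      rw [Walk.mem_support_iff_exists_getVert]
      refine ⟨i, ?_, by omega⟩
      rw [Walk.getVert_cons_succ] at heq
      rw [heq]; rfl
    | i + 1, j + 1 =>
      rw [Walk.getVert_cons_succ, Walk.getVert_cons_succ] at heq
      have := ih hp.1 i (by omega) j (by omega) heq
      omega

lemma connected_insert {H : SimpleGraph V} {C : Set V} {s u : V}
    (hconn : (H.induce C).Connected) (hu : u ∈ C) (hadj : H.Adj u s) :
    (H.induce (insert s C)).Connected := by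
  have hιmap : ∀ x y : C, (H.induce C).Adj x y →
      (H.induce (insert s C)).Adj ⟨x.1, Set.mem_insert_of_mem _ x.2⟩
        ⟨y.1, Set.mem_insert_of_mem _ y.2⟩ := fun x y hxy => hxy
  let ι : H.induce C →g H.induce (insert s C) :=
    ⟨fun x => ⟨x.1, Set.mem_insert_of_mem _ x.2⟩, fun {x y} hxy => hιmap x y hxy⟩
  have hreach : ∀ x : (insert s C : Set V),
      (H.induce (insert s C)).Reachable x ⟨u, Set.mem_insert_of_mem _ hu⟩ := by
    rintro ⟨x, hx⟩
    rcases Set.mem_insert_iff.mp hx with rfl | hxC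
    · exact Adj.reachable (by exact hadj.symm)
    · exact (hconn.preconnected ⟨x, hxC⟩ ⟨u, hu⟩).map ι
  haveI : Nonempty (insert s C : Set V) := ⟨⟨u, Set.mem_insert_of_mem _ hu⟩⟩
  exact ⟨fun x y => (hreach x).trans (hreach y).symm⟩

lemma dominator_aux {H : SimpleGraph V} (hch : IsChordal H) {C : Set V} (hCne : C.Nonempty)
    (hconn : (H.induce C).Connected) (S : Finset V) :
    H.IsClique ↑S → Disjoint C (↑S : Set V) → (∀ v ∈ S, ∃ u ∈ C, H.Adj u v) →
    ∃ d ∈ C, ∀ v ∈ S, H.Adj d v := by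
  classical
  induction S using Finset.cons_induction with
  | empty =>
    intro _ _ _
    obtain ⟨d, hd⟩ := hCne
    exact ⟨d, hd, by simp⟩
  | cons s T hsT ih =>
    intro hS hdisj hfull
    rw [Finset.coe_cons] at hS hdisj
    obtain ⟨d, hdC, hd⟩ := ih (hS.subset (Set.subset_insert _ _))
      (hdisj.mono_right (Set.subset_insert _ _))
      (fun v hv => hfull v (Finset.mem_cons_of_mem hv))
    have hsC : s ∉ C := fun hsC => Set.disjoint_left.mp hdisj hsC (Set.mem_insert _ _)
    by_cases hds : H.Adj d s
    · refine ⟨d, hdC, fun v hv => ?_⟩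
      rcases Finset.mem_cons.mp hv with rfl | hv
      · exact hds
      · exact hd v hv
    obtain ⟨u, huC, hus⟩ := hfull s (Finset.mem_cons_self _ _)
    set W : Set V := insert s C with hW
    have hconnW : (H.induce W).Connected := connected_insert hconn huC hus
    have hdW : d ∈ W := Set.mem_insert_of_mem _ hdC
    have hsW : s ∈ W := Set.mem_insert _ _
    obtain ⟨p, hlen⟩ := hconnW.exists_walk_length_eq_dist ⟨d, hdW⟩ ⟨s, hsW⟩
    have hp : p.IsPath := p.isPath_of_length_eq_dist hlen
    set k := p.length with hk
    have hne : d ≠ s := fun h => hsC (h ▸ hdC)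
    have hk0 : k ≠ 0 := fun h =>
      hne (congrArg Subtype.val (Walk.eq_of_length_eq_zero h))
    set w : ℕ → V := fun a => (p.getVert a).1 with hwdef
    have hwk : w k = s := by
      show (p.getVert p.length).1 = s
      rw [p.getVert_length]
    have hw0 : w 0 = d := by
      show (p.getVert 0).1 = d
      rw [p.getVert_zero]
    have hwadj : ∀ a, a < k → H.Adj (w a) (w (a+1)) := fun a ha => p.adj_getVert_succ ha
    have hwinj : ∀ a, a ≤ k → ∀ b, b ≤ k → w a = w b → a = b := by
      intro a ha b hb h
      exact getVert_inj_of_isPath hp a ha b hb (Subtype.ext h)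
    have hwW : ∀ a, w a ∈ W := fun a => (p.getVert a).2
    have hwC : ∀ a, a < k → w a ∈ C := by
      intro a ha
      rcases Set.mem_insert_iff.mp (hwW a) with h | h
      · exfalso
        have := hwinj a (le_of_lt ha) k le_rfl (by rw [hwk]; exact h)
        omega
      · exact h
    have hk2 : 2 ≤ k := by
      by_contra h
      push_neg at h
      have hk1' : k = 1 := by omega
      have hadj01 := hwadj 0 (by omega)
      rw [hw0] at hadj01
      have hw1 : w 1 = s := by rw [← hwk, hk1']
      rw [hw1] at hadj01
      exact hds hadj01
    have hnochord : ∀ a b, b ≤ k → a + 1 < b → ¬H.Adj (w a) (w b) := by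
      intro a b hb hab hadj
      exact no_chord hconnW p hlen hab hb (by exact hadj)
    have claim : ∀ t ∈ T, H.Adj t (w (k-1)) := by
      intro t htT
      have htsne : t ≠ s := fun h => hsT (h ▸ htT)
      have htC : t ∉ C := fun h =>
        Set.disjoint_left.mp hdisj h (Set.mem_insert_of_mem _ (Finset.mem_coe.mpr htT))
      have htne : ∀ a, a ≤ k → t ≠ w a := by
        intro a _ h
        rcases Set.mem_insert_iff.mp (h ▸ hwW a) with h' | h'
        · exact htsne h'
        · exact htC h'
      have hts : H.Adj t s := hS (Set.mem_insert_of_mem _ (Finset.mem_coe.mpr htT))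
        (Set.mem_insert _ _) htsne
      have htd : H.Adj t d := (hd t htT).symm
      obtain ⟨i, hilt, hiadj, himax⟩ :
          ∃ i, i < k ∧ H.Adj t (w i) ∧ ∀ a, a < k → H.Adj t (w a) → a ≤ i := by
        have h0I : 0 ∈ (Finset.range k).filter (fun a => H.Adj t (w a)) :=
          Finset.mem_filter.mpr ⟨Finset.mem_range.mpr (by omega), by rw [hw0]; exact htd⟩
        have hmem := Finset.max'_mem _ ⟨0, h0I⟩
        rw [Finset.mem_filter, Finset.mem_range] at hmem
        exact ⟨_, hmem.1, hmem.2, fun a ha hadj =>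
          Finset.le_max' _ _ (Finset.mem_filter.mpr ⟨Finset.mem_range.mpr ha, hadj⟩)⟩
      by_cases hik : i = k - 1
      · rw [← hik]; exact hiadj
      exfalso
      apply cycle_data_false hch t (k - i) (by omega) (fun a => w (i + a))
      · intro a ha
        exact hwadj (i+a) (by omega)
      · intro a b hb hab
        exact hnochord (i+a) (i+b) (by omega) (by omega)
      · intro a ha b hb h
        have := hwinj (i+a) (by omega) (i+b) (by omega) h
        omega
      · intro a ha
        exact htne (i+a) (by omega)
      · simpa using hiadj
      · have hik' : i + (k - i) = k := by omega
        rw [hik', hwk]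
        exact hts
      · intro a ha0 ham hadj
        have := himax (i + a) (by omega) hadj
        omega
    refine ⟨w (k-1), hwC (k-1) (by omega), ?_⟩
    intro v hv
    rcases Finset.mem_cons.mp hv with rfl | hv
    · have hadj := hwadj (k-1) (by omega)
      have hsucc : k - 1 + 1 = k := by omega
      rw [hsucc, hwk] at hadj
      exact hadj
    · exact (claim v hv).symm

theorem stmt0 [Fintype V] (G : SimpleGraph V) (K : Set V) (hK : IsPMCtri G K) :
    ∀ C : Set V, IsCompOf G K C → ∃ v ∈ K, ∀ u ∈ C, ¬ G.Adj u v := by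
  intro C hC
  by_contra hcon
  push_neg at hcon
  obtain ⟨H, ⟨hGH, hch, -⟩, hKcl, hKmax⟩ := hK
  obtain ⟨hCne, hdisj, hconnG, -⟩ := hC
  have hconnH : (H.induce C).Connected := hconnG.mono (fun a b hab => hGH hab)
  have hKfin : K.Finite := Set.toFinite K
  obtain ⟨d, hdC, hdom⟩ := dominator_aux hch hCne hconnH hKfin.toFinset
    (by rw [Set.Finite.coe_toFinset]; exact hKcl)
    (by rw [Set.Finite.coe_toFinset]; exact hdisj)
    (by intro v hv
        rw [Set.Finite.mem_toFinset] at hv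
        obtain ⟨u, huC, hu⟩ := hcon v hv
        exact ⟨u, huC, hGH hu⟩)
  have hclq : H.IsClique (insert d K) :=
    hKcl.insert (fun b hb _ => hdom b (hKfin.mem_toFinset.mpr hb))
  have heq := hKmax (insert d K) (Set.subset_insert _ _) hclq
  have hdK : d ∈ K := by rw [← heq]; exact Set.mem_insert _ _
  exact Set.disjoint_left.mp hdisj hdC hdK
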